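/- R* is the unique tensor with these properties: if T : V×V×V×V → ℝ is a multilinear map satisfying T(X,Y,Z,U) = −T(Y,X,Z,U), T(X,Y,Z,U) = −T(X,Y,U,Z), the first Bianchi identity T(X,Y,Z,U) + T(Y,Z,X,U) + T(Z,X,Y,U) = 0, the J-invariance T(X,Y,Z,U) = T(JX,JY,Z,U) for all X,Y,Z,U ∈ V, and T(X,JX,JX,X) = R(X,JX,JX,X) for all X ∈ V, then T = R*. -/

import Mathlib

open RealInnerProductSpace
open scoped BigOperators

noncomputable section

/-- A (curried) 4-linear form on `V`. -/
abbrev Tensor4 (V : Type*) [NormedAddCommGroup V] [InnerProductSpace ℝ V] :=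
  V →ₗ[ℝ] V →ₗ[ℝ] V →ₗ[ℝ] V →ₗ[ℝ] ℝ

variable {V : Type*} [NormedAddCommGroup V] [InnerProductSpace ℝ V]

/-- `J` is an orthogonal complex structure: `J ∘ J = -id` and `g(JX, JY) = g(X, Y)`. -/
def OrthJ (J : V →ₗ[ℝ] V) : Prop :=
  (∀ X : V, J (J X) = -X) ∧ (∀ X Y : V, ⟪J X, J Y⟫ = ⟪X, Y⟫)

/-- `R` is a curvature-like tensor. -/
def CurvatureLike (R : Tensor4 V) : Prop :=
  (∀ X Y Z U : V, R X Y Z U = - R Y X Z U) ∧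
  (∀ X Y Z U : V, R X Y Z U = - R X Y U Z) ∧
  (∀ X Y Z U : V, R X Y Z U = R Z U X Y) ∧
  (∀ X Y Z U : V, R X Y Z U + R Y Z X U + R Z X Y U = 0)

/-- `R` is an RK-tensor: `R(X,Y,Z,U) = R(JX,JY,JZ,JU)`. -/
def IsRK (J : V →ₗ[ℝ] V) (R : Tensor4 V) : Prop :=
  ∀ X Y Z U : V, R X Y Z U = R (J X) (J Y) (J Z) (J U)

/-- The tensor `R*` associated to `R` and `J`. -/
def Rstar (J : V →ₗ[ℝ] V) (R : Tensor4 V) (X Y Z U : V) : ℝ :=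
  (3 / 16) * (R X Y Z U + R X Y (J Z) (J U) + R (J X) (J Y) Z U +
      R (J X) (J Y) (J Z) (J U)) +
  (1 / 16) * (R (J X) (J Z) Y U - R (J Y) (J Z) X U + R X Z (J Y) (J U) -
      R Y Z (J X) (J U) + R Y (J Z) (J X) U - R X (J Z) (J Y) U +
      R (J Y) Z X (J U) - R (J X) Z Y (J U))

variable {ι : Type*} [Fintype ι]

/-- The Ricci form `S(X,Y) = Σᵢ R(X,Eᵢ,Eᵢ,Y)`. -/
def ric (b : OrthonormalBasis ι ℝ V) (R : Tensor4 V) (X Y : V) : ℝ :=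
  ∑ i, R X (b i) (b i) Y

/-- `S'(X,Y) = Σᵢ R(X,Eᵢ,JEᵢ,JY)`. -/
def ric' (J : V →ₗ[ℝ] V) (b : OrthonormalBasis ι ℝ V) (R : Tensor4 V) (X Y : V) : ℝ :=
  ∑ i, R X (b i) (J (b i)) (J Y)

/-- `S*(X,Y) = Σᵢ R*(X,Eᵢ,Eᵢ,Y)`. -/
def ricStar (J : V →ₗ[ℝ] V) (b : OrthonormalBasis ι ℝ V) (R : Tensor4 V) (X Y : V) : ℝ :=
  ∑ i, Rstar J R X (b i) (b i) Y

/-- The scalar curvature `τ = Σᵢ S(Eᵢ,Eᵢ)`. -/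
def scal (b : OrthonormalBasis ι ℝ V) (R : Tensor4 V) : ℝ :=
  ∑ i, ric b R (b i) (b i)

/-- `τ' = Σᵢ S'(Eᵢ,Eᵢ)`. -/
def scal' (J : V →ₗ[ℝ] V) (b : OrthonormalBasis ι ℝ V) (R : Tensor4 V) : ℝ :=
  ∑ i, ric' J b R (b i) (b i)

/-- `τ* = Σᵢ S*(Eᵢ,Eᵢ)`. -/
def scalStar (J : V →ₗ[ℝ] V) (b : OrthonormalBasis ι ℝ V) (R : Tensor4 V) : ℝ :=
  ∑ i, ricStar J b R (b i) (b i)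

/-- The operator `φ` applied to a bilinear form `Q`. -/
def phi (Q : V → V → ℝ) (X Y Z U : V) : ℝ :=
  ⟪X, U⟫ * Q Y Z - ⟪X, Z⟫ * Q Y U + ⟪Y, Z⟫ * Q X U - ⟪Y, U⟫ * Q X Z

/-- The operator `ψ` applied to a bilinear form `Q`. -/
def psi (J : V →ₗ[ℝ] V) (Q : V → V → ℝ) (X Y Z U : V) : ℝ :=
  ⟪X, J U⟫ * Q Y (J Z) - ⟪X, J Z⟫ * Q Y (J U) - 2 * ⟪X, J Y⟫ * Q Z (J U) +
  ⟪Y, J Z⟫ * Q X (J U) - ⟪Y, J U⟫ * Q X (J Z) - 2 * ⟪Z, J U⟫ * Q X (J Y)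

/-- `π₁(X,Y,Z,U) = g(X,U)g(Y,Z) − g(X,Z)g(Y,U)`. -/
def pi1 (X Y Z U : V) : ℝ :=
  ⟪X, U⟫ * ⟪Y, Z⟫ - ⟪X, Z⟫ * ⟪Y, U⟫

/-- `π₂(X,Y,Z,U) = g(X,JU)g(Y,JZ) − g(X,JZ)g(Y,JU) − 2g(X,JY)g(Z,JU)`. -/
def pi2 (J : V →ₗ[ℝ] V) (X Y Z U : V) : ℝ :=
  ⟪X, J U⟫ * ⟪Y, J Z⟫ - ⟪X, J Z⟫ * ⟪Y, J U⟫ - 2 * ⟪X, J Y⟫ * ⟪Z, J U⟫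

/-- The generalized Bochner curvature tensor `B*`. -/
def Bstar (m : ℕ) (J : V →ₗ[ℝ] V) (b : OrthonormalBasis ι ℝ V) (R : Tensor4 V)
    (X Y Z U : V) : ℝ :=
  Rstar J R X Y Z U
    - (1 / (2 * ((m : ℝ) + 2))) *
        (phi (ricStar J b R) X Y Z U + psi J (ricStar J b R) X Y Z U)
    + (scalStar J b R / (4 * ((m : ℝ) + 1) * ((m : ℝ) + 2))) *
        (pi1 X Y Z U + pi2 J X Y Z U)

/-- The Bochner curvature tensor `B` of an RK-tensor. -/
def Bochner (m : ℕ) (J : V →ₗ[ℝ] V) (b : OrthonormalBasis ι ℝ V) (R : Tensor4 V)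
    (X Y Z U : V) : ℝ :=
  R X Y Z U
    - (1 / (8 * ((m : ℝ) + 2))) *
        (phi (fun x y => ric b R x y + 3 * ric' J b R x y) X Y Z U +
         psi J (fun x y => ric b R x y + 3 * ric' J b R x y) X Y Z U)
    - (1 / (8 * ((m : ℝ) - 2))) *
        (3 * phi (fun x y => ric b R x y - ric' J b R x y) X Y Z U -
         psi J (fun x y => ric b R x y - ric' J b R x y) X Y Z U)
    + ((scal b R + 3 * scal' J b R) / (16 * ((m : ℝ) + 1) * ((m : ℝ) + 2))) *
        (pi1 X Y Z U + pi2 J X Y Z U)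
    + ((scal b R - scal' J b R) / (16 * ((m : ℝ) - 1) * ((m : ℝ) - 2))) *
        (3 * pi1 X Y Z U - pi2 J X Y Z U)


section Aux
variable {V : Type*} [NormedAddCommGroup V] [InnerProductSpace ℝ V]

private lemma pair_of (D : V → V → V → V → ℝ)
    (h1 : ∀ a b c d : V, D a b c d = - D b a c d)
    (h2 : ∀ a b c d : V, D a b c d = - D a b d c)
    (h3 : ∀ a b c d : V, D a b c d + D b c a d + D c a b d = 0) :
    ∀ X Y Z U : V, D X Y Z U = D Z U X Y := by
  intro X Y Z U
  linear_combination (1/2) * (h2 X Y Z U) + (1/2) * (h3 X Y Z U) + (-1/2) * (h3 X Y U Z) + (-1/2) * (h1 X Z Y U) + (1/2) * (h2 X Z Y U) + (-1/2) * (h3 X Z U Y) + (1/2) * (h1 X U Y Z) + (-1/2) * (h2 X U Y Z) + (1/2) * (h1 X U Z Y) + (-1/2) * (h2 Y Z X U) + (1/2) * (h3 Y Z U X) + (1/2) * (h2 Y U X Z) + (-1/2) * (h1 Y U Z X) + (-1/2) * (h2 Z U X Y)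

set_option maxHeartbeats 1000000 in
private lemma lemA (J : V →ₗ[ℝ] V) (hJJ : ∀ X : V, J (J X) = -X) (T : Tensor4 V)
    (h1 : ∀ a b c d : V, T a b c d = - T b a c d)
    (h2 : ∀ a b c d : V, T a b c d = - T a b d c)
    (h3 : ∀ a b c d : V, T a b c d + T b c a d + T c a b d = 0)
    (h4 : ∀ a b c d : V, T a b c d = T (J a) (J b) c d) :
    ∀ X Y Z U : V, Rstar J T X Y Z U = T X Y Z U := by
  have hp : ∀ a b c d : V, T a b c d = T c d a b :=
    pair_of (fun a b c d => T a b c d) h1 h2 h3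
  have h4' : ∀ a b c d : V, T (J a) b c d = - T a (J b) c d := by
    intro a b c d
    have h := h4 (J a) b c d
    rw [hJJ] at h
    rw [h, ← neg_one_smul ℝ a, map_smul]; simp
  intro X Y Z U
  simp only [Rstar]
  linear_combination (-1/2) * (h2 X Y Z U) + (-1/2) * (h3 X Y Z U) + (1/2) * (h3 X Y U Z) + (3/8) * (h2 X Y (J Z) (J U)) + (-3/8) * (h3 X Y (J U) (J Z)) + (1/2) * (h1 X Z Y U) + (-1/16) * (h1 X Z (J Y) (J U)) + (-3/8) * (h2 X Z (J Y) (J U)) + (1/2) * (hp X Z (J Y) (J U)) + (3/8) * (h3 X Z (J U) (J Y)) + (-1/2) * (h1 X U Y Z) + (7/16) * (h2 X U (J Y) (J Z)) + (-7/16) * (hp X U (J Y) (J Z)) + (-7/16) * (h3 X U (J Z) (J Y)) + (3/8) * (hp X (J Y) Z (J U)) + (1/16) * (h3 X (J Y) Z (J U)) + (-7/16) * (hp X (J Y) U (J Z)) + (-3/8) * (hp X (J Z) Y (J U)) + (7/16) * (h1 X (J Z) U (J Y)) + (-1/16) * (h2 X (J Z) U (J Y)) + (3/8) * (h1 X (J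 U) Y (J Z)) + (-3/8) * (h1 X (J U) Z (J Y)) + (7/16) * (h1 Y Z (J X) (J U)) + (-1/2) * (hp Y Z (J X) (J U)) + (-3/8) * (h1 Y U (J X) (J Z)) + (-1/16) * (h2 Y U (J X) (J Z)) + (7/16) * (hp Y U (J X) (J Z)) + (1/16) * (h3 Y U (J Z) (J X)) + (7/16) * (h1 Y (J X) Z (J U)) + (-7/16) * (h3 Y (J X) Z (J U)) + (-7/16) * (h1 Y (J X) U (J Z)) + (1/16) * (hp Y (J X) U (J Z)) + (3/8) * (h3 Y (J X) U (J Z)) + (-1/16) * (h1 Y (J Z) U (J X)) + (1/16) * (h2 Y (J Z) U (J X)) + (3/8) * (h1 Z U (J X) (J Y)) + (-3/8) * (hp Z U (J X) (J Y)) + (3/8) * (h1 Z (J X) U (J Y)) + (-3/8) * (h3 Z (J X) U (J Y)) + (3/16) * (h4 X Y Z U) + (-7/16) * (h4' X Y Z (J U)) + (7/16) * (h4' X Y U (J Z)) + (-3/16) * (h4 X Y (J Z) (J U)) + (-1/2) * (h4 X Z Y U) + (3/8) * (h4' X Z Y (J U)) + (-3/8) * (h4' X Z U (J Y)) + (1/2)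 * (h4 X U Y Z) + (-3/8) * (h4' X U Y (J Z)) + (3/8) * (h4' X U Z (J Y)) + (1/2) * (h4 Y Z X U) + (-1/2) * (h4 Y U X Z)

set_option maxHeartbeats 4000000 in
private lemma lemB (J : V →ₗ[ℝ] V) (hJJ : ∀ X : V, J (J X) = -X) (f : V → V → V → V → ℝ)
    (ha1 : ∀ x y b c d : V, f (x + y) b c d = f x b c d + f y b c d)
    (ha2 : ∀ a x y c d : V, f a (x + y) c d = f a x c d + f a y c d)
    (ha3 : ∀ a b x y d : V, f a b (x + y) d = f a b x d + f a b y d)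
    (ha4 : ∀ a b c x y : V, f a b c (x + y) = f a b c x + f a b c y)
    (hn1 : ∀ x b c d : V, f (-x) b c d = - f x b c d)
    (hn2 : ∀ a x c d : V, f a (-x) c d = - f a x c d)
    (hn3 : ∀ a b x d : V, f a b (-x) d = - f a b x d)
    (hn4 : ∀ a b c x : V, f a b c (-x) = - f a b c x)
    (f1 : ∀ a b c d : V, f a b c d = - f b a c d)
    (f2 : ∀ a b c d : V, f a b c d = - f a b d c)
    (f3 : ∀ a b c d : V, f a b c d + f b c a d + f c a b d = 0)
    (hQ : ∀ X : V, f X (J X) (J X) X = 0) :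
    ∀ X Y Z U : V,
      (3 / 16) * (f X Y Z U + f X Y (J Z) (J U) + f (J X) (J Y) Z U +
          f (J X) (J Y) (J Z) (J U)) +
      (1 / 16) * (f (J X) (J Z) Y U - f (J Y) (J Z) X U + f X Z (J Y) (J U) -
          f Y Z (J X) (J U) + f Y (J Z) (J X) U - f X (J Z) (J Y) U +
          f (J Y) Z X (J U) - f (J X) Z Y (J U)) = 0 := by
  have fp := pair_of f f1 f2 f3
  intro X Y Z U
  have q1 := hQ (U)
  try simp only [sub_eq_add_neg, map_add, map_neg, ha1, ha2, ha3, ha4, hn1, hn2, hn3, hn4, hJJ] at q1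
  have q2 := hQ (Z)
  try simp only [sub_eq_add_neg, map_add, map_neg, ha1, ha2, ha3, ha4, hn1, hn2, hn3, hn4, hJJ] at q2
  have q3 := hQ (Z + (J U))
  simp only [sub_eq_add_neg, map_add, map_neg, ha1, ha2, ha3, ha4, hn1, hn2, hn3, hn4, hJJ] at q3
  have q4 := hQ (Y)
  try simp only [sub_eq_add_neg, map_add, map_neg, ha1, ha2, ha3, ha4, hn1, hn2, hn3, hn4, hJJ] at q4
  have q5 := hQ (Y + U)
  simp only [sub_eq_add_neg, map_add, map_neg, ha1, ha2, ha3, ha4, hn1, hn2, hn3, hn4, hJJ] at q5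
  have q6 := hQ (Y + (J U))
  simp only [sub_eq_add_neg, map_add, map_neg, ha1, ha2, ha3, ha4, hn1, hn2, hn3, hn4, hJJ] at q6
  have q7 := hQ (Y + Z)
  simp only [sub_eq_add_neg, map_add, map_neg, ha1, ha2, ha3, ha4, hn1, hn2, hn3, hn4, hJJ] at q7
  have q8 := hQ (Y + Z + U)
  simp only [sub_eq_add_neg, map_add, map_neg, ha1, ha2, ha3, ha4, hn1, hn2, hn3, hn4, hJJ] at q8
  have q9 := hQ (Y + (J Z))
  simp only [sub_eq_add_neg, map_add, map_neg, ha1, ha2, ha3, ha4, hn1, hn2, hn3, hn4, hJJ] at q9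
  have q10 := hQ (Y + (J Z) + (J U))
  simp only [sub_eq_add_neg, map_add, map_neg, ha1, ha2, ha3, ha4, hn1, hn2, hn3, hn4, hJJ] at q10
  have q11 := hQ (Y - (J Z))
  simp only [sub_eq_add_neg, map_add, map_neg, ha1, ha2, ha3, ha4, hn1, hn2, hn3, hn4, hJJ] at q11
  have q12 := hQ (Y + U - (J Z))
  simp only [sub_eq_add_neg, map_add, map_neg, ha1, ha2, ha3, ha4, hn1, hn2, hn3, hn4, hJJ] at q12
  have q13 := hQ (X)
  try simp only [sub_eq_add_neg, map_add, map_neg, ha1, ha2, ha3, ha4, hn1, hn2, hn3, hn4, hJJ] at q13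
  have q14 := hQ (X + U)
  simp only [sub_eq_add_neg, map_add, map_neg, ha1, ha2, ha3, ha4, hn1, hn2, hn3, hn4, hJJ] at q14
  have q15 := hQ (X + (J U))
  simp only [sub_eq_add_neg, map_add, map_neg, ha1, ha2, ha3, ha4, hn1, hn2, hn3, hn4, hJJ] at q15
  have q16 := hQ (X + Z)
  simp only [sub_eq_add_neg, map_add, map_neg, ha1, ha2, ha3, ha4, hn1, hn2, hn3, hn4, hJJ] at q16
  have q17 := hQ (X + Z + U)
  simp only [sub_eq_add_neg, map_add, map_neg, ha1, ha2, ha3, ha4, hn1, hn2, hn3, hn4, hJJ] at q17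
  have q18 := hQ (X + Z + (J U))
  simp only [sub_eq_add_neg, map_add, map_neg, ha1, ha2, ha3, ha4, hn1, hn2, hn3, hn4, hJJ] at q18
  have q19 := hQ (X + (J Z))
  simp only [sub_eq_add_neg, map_add, map_neg, ha1, ha2, ha3, ha4, hn1, hn2, hn3, hn4, hJJ] at q19
  have q20 := hQ (X + (J Z) + (J U))
  simp only [sub_eq_add_neg, map_add, map_neg, ha1, ha2, ha3, ha4, hn1, hn2, hn3, hn4, hJJ] at q20
  have q21 := hQ (X + Y + U)
  simp only [sub_eq_add_neg, map_add, map_neg, ha1, ha2, ha3, ha4, hn1, hn2, hn3, hn4, hJJ] at q21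
  have q22 := hQ (X + Y + (J U))
  simp only [sub_eq_add_neg, map_add, map_neg, ha1, ha2, ha3, ha4, hn1, hn2, hn3, hn4, hJJ] at q22
  have q23 := hQ (X + Y + Z)
  simp only [sub_eq_add_neg, map_add, map_neg, ha1, ha2, ha3, ha4, hn1, hn2, hn3, hn4, hJJ] at q23
  have q24 := hQ (X + Y + Z + U)
  simp only [sub_eq_add_neg, map_add, map_neg, ha1, ha2, ha3, ha4, hn1, hn2, hn3, hn4, hJJ] at q24
  have q25 := hQ (X + Y + (J Z))
  simp only [sub_eq_add_neg, map_add, map_neg, ha1, ha2, ha3, ha4, hn1, hn2, hn3, hn4, hJJ] at q25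
  have q26 := hQ (X + Y + (J Z) + (J U))
  simp only [sub_eq_add_neg, map_add, map_neg, ha1, ha2, ha3, ha4, hn1, hn2, hn3, hn4, hJJ] at q26
  have q27 := hQ (X + (J Y))
  simp only [sub_eq_add_neg, map_add, map_neg, ha1, ha2, ha3, ha4, hn1, hn2, hn3, hn4, hJJ] at q27
  have q28 := hQ (X + (J Y) + (J U))
  simp only [sub_eq_add_neg, map_add, map_neg, ha1, ha2, ha3, ha4, hn1, hn2, hn3, hn4, hJJ] at q28
  have q29 := hQ (X + Z + (J Y))
  simp only [sub_eq_add_neg, map_add, map_neg, ha1, ha2, ha3, ha4, hn1, hn2, hn3, hn4, hJJ] at q29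
  have q30 := hQ (X + Z + (J Y) + (J U))
  simp only [sub_eq_add_neg, map_add, map_neg, ha1, ha2, ha3, ha4, hn1, hn2, hn3, hn4, hJJ] at q30
  linear_combination (1/16) * (f1 X Y Z U) + (3/32) * (f2 X Y Z U) + (1/32) * (f3 X Y Z U) + (-1/32) * (f3 X Y U Z) + (1/16) * (f1 X Y (J Z) (J U)) + (3/32) * (f2 X Y (J Z) (J U)) + (-1/32) * (f3 X Y (J Z) (J U)) + (-1/16) * (f1 X Y (J U) (J Z)) + (-1/32) * (f3 X Y (J U) (J Z)) + (-1/32) * (f1 X Z Y U) + (1/32) * (f2 X Z Y U) + (-1/32) * (f1 X Z (J Y) (J U)) + (1/16) * (f2 X Z (J Y) (J U)) + (-1/32) * (f1 X Z (J U) (J Y)) + (-1/32) * (f3 X Z (J U) (J Y)) + (1/32) * (f1 X U Y Z) + (1/32) * (f2 X U Y Z) + (-1/32) * (f1 X U (J Y) (J Z)) + (1/16) * (fp X U (J Y) (J Z)) + (-1/16) * (f3 X U (J Y) (J Z)) + (-1/32) * (f1 X U (J Z) (J Y)) + (-1/32) * (f3 X U (J Z) (J Y)) + (-1/32) * (f2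 X (J Y) Z (J U)) + (-1/16) * (fp X (J Y) Z (J U)) + (1/16) * (f3 X (J Y) Z (J U)) + (1/16) * (f1 X (J Y) U (J Z)) + (-1/32) * (f2 X (J Y) U (J Z)) + (-1/16) * (fp X (J Y) U (J Z)) + (1/32) * (f1 X (J Z) Y (J U)) + (-1/32) * (f2 X (J Z) Y (J U)) + (-1/16) * (fp X (J Z) Y (J U)) + (1/32) * (f1 X (J Z) U (J Y)) + (-3/32) * (f2 X (J Z) U (J Y)) + (1/32) * (f1 X (J U) Y (J Z)) + (-1/32) * (f2 X (J U) Y (J Z)) + (1/32) * (f1 X (J U) Z (J Y)) + (-1/32) * (f2 X (J U) Z (J Y)) + (-1/16) * (fp Y X Z U) + (-1/16) * (fp Y X (J Z) (J U)) + (1/16) * (fp Y X (J U) (J Z)) + (-1/16) * (f2 Y Y Z (J U)) + (1/16) * (f3 Y Y Z (J U)) + (1/16) * (f3 Y Y (J U) Z) + (-1/32) * (f2 Y Z X U) + (-1/16) * (f2 Y Z Y (J U)) + (-1/16) * (fp Y Z Z U) + (1/16) * (f1 Y Z U X) + (-1/16) * (f2 Y Z U (J Y)) + (1/16) * (fp Y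 Z U (J Y)) + (-1/16) * (f2 Y Z U (J U)) + (1/16) * (fp Y Z U (J U)) + (1/32) * (f1 Y Z (J X) (J U)) + (-1/16) * (fp Y Z (J X) (J U)) + (-1/16) * (f3 Y Z (J X) (J U)) + (-1/16) * (fp Y Z (J Y) U) + (1/16) * (f3 Y Z (J Y) U) + (1/16) * (f2 Y Z (J Z) (J U)) + (-1/16) * (fp Y Z (J Z) (J U)) + (-1/16) * (fp Y Z (J U) U) + (1/16) * (f3 Y Z (J U) U) + (-1/32) * (f1 Y Z (J U) (J X)) + (1/16) * (fp Y Z (J U) (J X)) + (-1/32) * (f3 Y Z (J U) (J X)) + (1/16) * (fp Y Z (J U) (J Z)) + (-1/16) * (f3 Y Z (J U) (J Z)) + (1/32) * (f2 Y U X Z) + (-1/16) * (f2 Y U Z (J Y)) + (1/16) * (fp Y U Z (J Y)) + (-1/16) * (f2 Y U Z (J U)) + (1/16) * (fp Y U Z (J U)) + (1/32) * (f1 Y U (J X) (J Z)) + (-1/16) * (fp Y U (J X) (J Z)) + (1/16) * (f3 Y U (J Y) Z) + (-1/32) * (f1 Y U (J Z) (J X)) + (1/32) * (f3 Y U (J Z)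 (J X)) + (1/16) * (f3 Y U (J U) Z) + (1/16) * (f1 Y (J X) Z (J U)) + (1/32) * (f2 Y (J X) Z (J U)) + (-1/16) * (fp Y (J X) Z (J U)) + (-1/16) * (f3 Y (J X) Z (J U)) + (-1/32) * (f2 Y (J X) U (J Z)) + (-1/16) * (f3 Y (J X) (J U) Z) + (-1/16) * (f1 Y (J Y) Z U) + (1/16) * (f2 Y (J Y) (J Z) (J U)) + (-1/16) * (fp Y (J Y) (J Z) (J U)) + (1/16) * (fp Y (J Y) (J U) (J Z)) + (-1/16) * (f3 Y (J Y) (J U) (J Z)) + (1/32) * (f2 Y (J Z) X (J U)) + (1/16) * (f2 Y (J Z) Z (J U)) + (-1/16) * (fp Y (J Z) Z (J U)) + (-1/32) * (f1 Y (J Z) U (J X)) + (1/32) * (f2 Y (J Z) U (J X)) + (1/16) * (f2 Y (J Z) (J Y) (J U)) + (-1/16) * (fp Y (J Z) (J Y) (J U)) + (-1/16) * (f3 Y (J Z) (J U) X) + (-1/16) * (f3 Y (J Z) (J U) Z) + (-1/16) * (f3 Y (J Z) (J U) (J Y)) + (1/16) * (f1 Y (J Z) (J U) (J U)) + (-1/16)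 * (f3 Y (J Z) (J U) (J U)) + (-1/32) * (f2 Y (J U) X (J Z)) + (-1/16) * (f2 Y (J U) Y Z) + (-1/16) * (f1 Y (J U) Z U) + (1/32) * (f1 Y (J U) Z (J X)) + (-1/32) * (f2 Y (J U) Z (J X)) + (1/16) * (f1 Y (J U) Z (J Z)) + (1/16) * (f1 Y (J U) (J Y) (J Z)) + (1/16) * (f2 Y (J U) (J Z) (J U)) + (-1/16) * (f3 Y (J U) (J Z) (J U)) + (-1/32) * (fp Z X (J Y) (J U)) + (1/32) * (fp Z X (J U) (J Y)) + (1/16) * (fp Z Y U Z) + (1/16) * (fp Z Y U (J Y)) + (1/16) * (fp Z Y U (J U)) + (-1/32) * (fp Z Y (J X) (J U)) + (-1/16) * (fp Z Y (J Z) (J U)) + (1/32) * (fp Z Y (J U) (J X)) + (1/32) * (f1 Z Z U U) + (-1/16) * (f3 Z Z U U) + (-1/16) * (f2 Z Z U (J Z)) + (1/16) * (f3 Z Z U (J Z)) + (1/16) * (f3 Z Z (J Z) U) + (1/32) * (f2 Z Z (J Z) (J U)) + (-1/32) * (f3 Z Z (J Z) (J U)) + (-1/32) * (f3 Z Z (J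 U) (J Z)) + (1/64) * (f1 Z Z (J U) (J U)) + (-1/32) * (f3 Z Z (J U) (J U)) + (1/16) * (f2 Z U Y (J Y)) + (1/16) * (f2 Z U Y (J U)) + (1/16) * (f2 Z U Z U) + (-1/16) * (f2 Z U Z (J Z)) + (1/16) * (fp Z U U (J Y)) + (1/16) * (fp Z U U (J U)) + (1/16) * (f1 Z U (J X) (J Y)) + (3/32) * (f2 Z U (J X) (J Y)) + (-3/16) * (fp Z U (J X) (J Y)) + (-1/32) * (f3 Z U (J X) (J Y)) + (-1/16) * (f1 Z U (J Y) Y) + (-1/16) * (f1 Z U (J Y) (J X)) + (-1/32) * (f3 Z U (J Y) (J X)) + (-1/16) * (f2 Z U (J Y) (J Z)) + (1/16) * (fp Z U (J Y) (J Z)) + (-1/16) * (fp Z U (J Z) (J Y)) + (1/16) * (f3 Z U (J Z) (J Y)) + (1/32) * (f1 Z U (J Z) (J Z)) + (-1/32) * (f3 Z U (J Z) (J Z)) + (3/32) * (f1 Z U (J Z) (J U)) + (-1/16) * (fp Z U (J Z) (J U)) + (-3/32) * (f3 Z U (J Z) (J U)) + (-1/16) * (f1 Z U (J U) Y) + (1/32)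 * (f1 Z U (J U) (J U)) + (-1/32) * (f3 Z U (J U) (J U)) + (1/32) * (f1 Z (J X) U (J Y)) + (-1/32) * (f2 Z (J X) U (J Y)) + (-1/16) * (fp Z (J X) U (J Y)) + (-1/32) * (f3 Z (J X) (J U) Y) + (1/32) * (f1 Z (J Y) U (J X)) + (-1/32) * (f2 Z (J Y) U (J X)) + (-1/16) * (f2 Z (J Y) U (J Z)) + (1/16) * (fp Z (J Y) U (J Z)) + (1/16) * (f3 Z (J Y) (J Z) U) + (-1/32) * (f3 Z (J Y) (J U) X) + (-1/16) * (f2 Z (J Z) Y (J U)) + (-1/16) * (f2 Z (J Z) Z U) + (1/32) * (f2 Z (J Z) Z (J U)) + (-1/16) * (f1 Z (J Z) U (J Y)) + (1/32) * (f2 Z (J Z) U (J Z)) + (-1/32) * (f3 Z (J Z) U (J Z)) + (1/16) * (f1 Z (J Z) U (J U)) + (-1/16) * (f2 Z (J Z) U (J U)) + (-1/32) * (fp Z (J Z) U (J U)) + (-1/32) * (f3 Z (J Z) U (J U)) + (1/16) * (fp Z (J Z) (J Z) (J U)) + (1/16) * (f1 Z (J Z) (J U) Y) + (1/16) * (f1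 Z (J Z) (J U) U) + (1/32) * (fp Z (J Z) (J U) U) + (-1/32) * (f2 Z (J U) X (J Y)) + (-1/32) * (f2 Z (J U) Y (J X)) + (1/32) * (f2 Z (J U) Z (J Z)) + (1/32) * (f2 Z (J U) Z (J U)) + (-1/32) * (f1 Z (J U) U (J Z)) + (1/32) * (f2 Z (J U) U (J Z)) + (1/32) * (f2 Z (J U) U (J U)) + (-1/32) * (f3 Z (J U) U (J U)) + (1/32) * (fp U X (J Y) (J Z)) + (1/32) * (fp U X (J Z) (J Y)) + (-1/32) * (fp U Y (J X) (J Z)) + (1/32) * (fp U Y (J Z) (J X)) + (-1/16) * (fp U Z (J X) (J Y)) + (-1/16) * (fp U Z (J Y) U) + (1/16) * (fp U Z (J Y) (J X)) + (1/16) * (fp U Z (J Y) (J Z)) + (-1/16) * (fp U Z (J Z) (J U)) + (-1/16) * (fp U Z (J U) U) + (1/16) * (fp U Z (J U) (J Z)) + (1/64) * (f1 U U (J Z) (J Z)) + (-1/32) * (f3 U U (J Z) (J Z)) + (1/32) * (f2 U U (J Z) (J U)) + (-1/32) * (f3 U U (J Z) (J U)) + (-1/32) * (f3 U U (J U) (J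 Z)) + (-1/32) * (f1 U U (J U) (J U)) + (1/16) * (f3 U U (J U) (J U)) + (1/32) * (f2 U (J X) Z (J Y)) + (-1/16) * (f3 U (J X) (J Y) Z) + (-1/32) * (f3 U (J X) (J Z) Y) + (1/16) * (f2 U (J Y) X (J Z)) + (-1/32) * (f2 U (J Y) Z (J X)) + (1/16) * (f2 U (J Y) Z (J Z)) + (1/16) * (fp U (J Y) (J Y) (J Z)) + (-1/16) * (f1 U (J Y) (J Z) X) + (-1/32) * (f3 U (J Y) (J Z) X) + (-1/16) * (f1 U (J Y) (J Z) Z) + (1/16) * (f2 U (J Y) (J Z) (J U)) + (-1/16) * (fp U (J Y) (J Z) (J U)) + (1/16) * (fp U (J Y) (J U) (J Z)) + (-1/16) * (f3 U (J Y) (J U) (J Z)) + (-1/32) * (f2 U (J Z) X (J Y)) + (-1/32) * (f2 U (J Z) Y (J X)) + (1/32) * (f2 U (J Z) Z (J Z)) + (3/32) * (f2 U (J Z) Z (J U)) + (1/32) * (f2 U (J Z) U (J Z)) + (1/32) * (f2 U (J Z) U (J U)) + (1/16) * (f2 U (J Z) (J Y) (J U)) + (-1/16) * (fp U (J Z) (J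 Y) (J U)) + (-1/16) * (f3 U (J Z) (J U) Z) + (-1/16) * (f3 U (J Z) (J U) (J Y)) + (1/16) * (f1 U (J Z) (J U) (J U)) + (-1/16) * (f3 U (J Z) (J U) (J U)) + (1/32) * (f2 U (J U) Z (J Z)) + (1/32) * (f2 U (J U) Z (J U)) + (1/32) * (f2 U (J U) U (J Z)) + (-1/16) * (f2 U (J U) U (J U)) + (1/16) * (f1 U (J U) (J Y) (J Z)) + (1/16) * (f2 U (J U) (J Z) (J U)) + (-1/16) * (f3 U (J U) (J Z) (J U)) + (1/32) * (f1 (J X) (J Y) (J Z) (J U)) + (1/32) * (f2 (J X) (J Y) (J Z) (J U)) + (1/16) * (fp (J X) (J Y) (J Z) (J U)) + (1/16) * (f3 (J X) (J Y) (J Z) (J U)) + (-1/16) * (fp (J X) (J Y) (J U) (J Z)) + (1/32) * (f3 (J X) (J Y) (J U) (J Z)) + (-1/32) * (f1 (J X) (J Z) (J Y) (J U)) + (-1/32) * (f2 (J X) (J Z) (J Y) (J U)) + (1/32) * (fp (J X) (J Z) (J Y) (J U)) + (1/32) * (f3 (J X) (J Z) (J Y) (J U)) + (-1/32) * (fp (J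 X) (J Z) (J U) (J Y)) + (1/16) * (f3 (J X) (J Z) (J U) (J Y)) + (-1/16) * (fp (J Y) Y (J Z) (J U)) + (-1/16) * (fp (J Y) U (J Z) (J Y)) + (-1/16) * (fp (J Y) U (J Z) (J U)) + (-1/16) * (f2 (J Y) (J Z) Y (J U)) + (-1/16) * (f2 (J Y) (J Z) U (J U)) + (1/16) * (fp (J Y) (J Z) (J Z) (J U)) + (1/16) * (f1 (J Y) (J Z) (J U) Y) + (1/16) * (f1 (J Y) (J Z) (J U) U) + (-1/16) * (fp (J Z) Z (J U) (J Z)) + (-1/16) * (fp (J Z) (J Y) (J U) (J Z)) + (-1/32) * (f1 (J Z) (J Z) (J U) (J U)) + (1/16) * (f3 (J Z) (J Z) (J U) (J U)) + (1/16) * (f2 (J Z) (J U) Y (J U)) + (1/16) * (f2 (J Z) (J U) U (J U)) + (-1/16) * (f2 (J Z) (J U) (J Z) (J U)) + (1/16) * (q1) + (1/16) * (q2) + (-1/16) * (q3) + (1/16) * (q4) + (-1/32) * (q5) + (-1/32) * (q6) + (1/32) * (q7) + (-1/32) * (q8) + (-1/32) * (q9) + (1/32) * (q10) + (-1/16) *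 (q11) + (1/16) * (q12) + (1/16) * (q13) + (1/32) * (q14) + (-3/32) * (q15) + (-1/32) * (q16) + (-1/32) * (q17) + (1/16) * (q18) + (-1/32) * (q19) + (1/32) * (q20) + (-1/32) * (q21) + (1/32) * (q22) + (-1/32) * (q23) + (1/32) * (q24) + (1/32) * (q25) + (-1/32) * (q26) + (-1/16) * (q27) + (1/16) * (q28) + (1/16) * (q29) + (-1/16) * (q30)

end Aux

set_option maxHeartbeats 400000 in
/-- `R*` is the unique tensor with the listed properties. -/
theorem Rstar_unique {V : Type*} [NormedAddCommGroup V] [InnerProductSpace ℝ V]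
    [FiniteDimensional ℝ V] {m : ℕ} (hm : 1 ≤ m) (hdim : Module.finrank ℝ V = 2 * m)
    (J : V →ₗ[ℝ] V) (hJ : OrthJ J) (R : Tensor4 V) (hR : CurvatureLike R)
    (T : Tensor4 V)
    (hT1 : ∀ X Y Z U : V, T X Y Z U = - T Y X Z U)
    (hT2 : ∀ X Y Z U : V, T X Y Z U = - T X Y U Z)
    (hT3 : ∀ X Y Z U : V, T X Y Z U + T Y Z X U + T Z X Y U = 0)
    (hT4 : ∀ X Y Z U : V, T X Y Z U = T (J X) (J Y) Z U)
    (hT5 : ∀ X : V, T X (J X) (J X) X = R X (J X) (J X) X) :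
    ∀ X Y Z U : V, T X Y Z U = Rstar J R X Y Z U := by
  obtain ⟨hJJ, -⟩ := hJ
  obtain ⟨hR1, hR2, hR3, hR4⟩ := hR
  have hQD : ∀ X : V, T X (J X) (J X) X - R X (J X) (J X) X = 0 := by
    intro X; linear_combination hT5 X
  intro X Y Z U
  have key := lemB J hJJ (fun a b c d => T a b c d - R a b c d)
    (by intro x y b c d; simp only [map_add, LinearMap.add_apply]; ring)
    (by intro a x y c d; simp only [map_add, LinearMap.add_apply]; ring)
    (by intro a b x y d; simp only [map_add, LinearMap.add_apply]; ring)
    (by intro a b c x y; simp only [map_add, LinearMap.add_apply]; ring)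
    (by intro x b c d; simp only [← neg_one_smul ℝ x, map_smul, LinearMap.smul_apply, smul_eq_mul]; ring)
    (by intro a x c d; simp only [map_neg, LinearMap.neg_apply]; ring)
    (by intro a b x d; simp only [map_neg, LinearMap.neg_apply]; ring)
    (by intro a b c x; simp only [map_neg, LinearMap.neg_apply]; ring)
    (by intro a b c d; (try dsimp only); linear_combination hT1 a b c d - hR1 a b c d)
    (by intro a b c d; (try dsimp only); linear_combination hT2 a b c d - hR2 a b c d)
    (by intro a b c d; (try dsimp only); linear_combination hT3 a b c d - hR4 a b c d)
    hQD X Y Z U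
  have projT := lemA J hJJ T hT1 hT2 hT3 hT4 X Y Z U
  beta_reduce at key
  simp only [Rstar] at projT ⊢
  linarith [key, projT]
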